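/- Let m ≥ 1 and T ∈ M_{2m}(F_q). If there exists a monic irreducible polynomial p such that the p-primary component of the F_q[t]-module (F_q^{2m}, T) requires more than m generators (equivalently, the partition c_T(p) has more than m parts), then T admits no m-dimensional splitting subspace; that is, there is no m-dimensional subspace W with W + T W = F_q^{2m}. -/

import Mathlib

open Polynomial

/-- If some `p`-primary component of the `F[t]`-module `(F^{2m}, T)` requires more
than `m` generators, then `T` has no `m`-dimensional splitting subspace, i.e. no
`m`-dimensional `W` with `W + T W = F^{2m}`. -/
theorem no_splitting_subspace_of_many_generators (F : Type*) [Field F] [Fintype F]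
    (m : ℕ) (hm : 1 ≤ m) (T : (Fin (2 * m) → F) →ₗ[F] (Fin (2 * m) → F))
    (p : F[X]) (hmonic : p.Monic) (hirr : Irreducible p)
    (hgen : m < sInf {k : ℕ | ∃ S : Finset (Module.AEval' T), S.card = k ∧
        Submodule.span F[X] (S : Set (Module.AEval' T)) =
          ⨆ e : ℕ, Submodule.torsionBy F[X] (Module.AEval' T) (p ^ e)}) :
    ¬ ∃ W : Submodule F (Fin (2 * m) → F),
        Module.finrank F W = m ∧ W ⊔ W.map T = ⊤ := by
  classical
  rintro ⟨W, hWrank, hsplit⟩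
  set V := Fin (2 * m) → F
  set M := Module.AEval' T
  set φ : V ≃ₗ[F] M := Module.AEval'.of T with hφ
  -- how scalar multiplication acts
  have hsmul : ∀ (q : F[X]) (x : M), q • x = φ (aeval T q (φ.symm x)) := by
    intro q x
    conv_lhs => rw [← φ.apply_symm_apply x]
    exact (Module.AEval.of_aeval_smul T q (φ.symm x)).symm
  set μ : F[X] := T.charpoly with hμdef
  have hμ0 : μ ≠ 0 := (LinearMap.charpoly_monic T).ne_zero
  have hann : ∀ x : M, μ • x = 0 := by
    intro x
    rw [hsmul, LinearMap.aeval_self_charpoly]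
    simp
  obtain ⟨a, r, hpr, hμ⟩ := WfDvdMonoid.max_power_factor hμ0 hirr
  -- the p-primary component equals torsionBy (p ^ a)
  have hsup : (⨆ e : ℕ, Submodule.torsionBy F[X] M (p ^ e))
      = Submodule.torsionBy F[X] M (p ^ a) := by
    apply le_antisymm
    · apply iSup_le
      intro e x hx
      rw [Submodule.mem_torsionBy_iff] at hx ⊢
      obtain ⟨u', v', huv'⟩ := (hirr.coprime_iff_not_dvd.mpr hpr).pow_left (m := e)
      have hx1 : x = (v' * r) • x := by
        calc x = (1 : F[X]) • x := (one_smul _ _).symm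
        _ = (u' * p ^ e + v' * r) • x := by rw [huv']
        _ = u' • ((p ^ e) • x) + (v' * r) • x := by rw [add_smul, mul_smul]
        _ = (v' * r) • x := by rw [hx, smul_zero, zero_add]
      calc (p ^ a) • x = (p ^ a) • (v' * r) • x := by rw [← hx1]
      _ = v' • (μ • x) := by
            rw [smul_smul, smul_smul, hμ]; congr 1; ring
      _ = 0 := by rw [hann, smul_zero]
    · exact le_iSup (fun e => Submodule.torsionBy F[X] M (p ^ e)) a
  -- Bezout coefficients
  obtain ⟨u, v, huv⟩ := (hirr.coprime_iff_not_dvd.mpr hpr).pow_left (m := a)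
  -- projection onto the p-primary part: multiplication by v * r
  set π : M →ₗ[F[X]] M := (v * r) • (LinearMap.id : M →ₗ[F[X]] M) with hπdef
  have hπ : ∀ x : M, π x = (v * r) • x := fun x => rfl
  have hrange : LinearMap.range π = Submodule.torsionBy F[X] M (p ^ a) := by
    apply le_antisymm
    · rintro _ ⟨x, rfl⟩
      rw [Submodule.mem_torsionBy_iff, hπ]
      calc (p ^ a) • (v * r) • x = v • (μ • x) := by
            rw [smul_smul, smul_smul, hμ]; congr 1; ring
      _ = 0 := by rw [hann, smul_zero]
    · intro x hx
      rw [Submodule.mem_torsionBy_iff] at hx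
      refine ⟨x, ?_⟩
      rw [hπ]
      calc (v * r) • x = u • ((p ^ a) • x) + (v * r) • x := by
            rw [hx, smul_zero, zero_add]
      _ = (u * p ^ a + v * r) • x := by rw [add_smul, mul_smul, mul_smul]
      _ = (1 : F[X]) • x := by rw [huv]
      _ = x := one_smul _ _
  -- basis of W gives m generators of M over F[X]
  have hWfin : FiniteDimensional F W := FiniteDimensional.finiteDimensional_submodule W
  set b : Module.Basis (Fin m) F W := Module.finBasisOfFinrankEq F W hWrank with hb
  set g : Fin m → M := fun i => φ ((b i : V)) with hg
  have hspanTop : Submodule.span F[X] (Set.range g) = ⊤ := by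
    set N : Submodule F M := (Submodule.span F[X] (Set.range g)).restrictScalars F with hN
    set N' : Submodule F V := N.comap (φ : V →ₗ[F] M) with hN'
    have hWN : W ≤ N' := by
      have hWspan : W = Submodule.span F (Set.range fun i => ((b i : V))) := by
        conv_lhs => rw [← Submodule.range_subtype W, ← Submodule.map_top, ← b.span_eq,
          Submodule.map_span]
        congr 1
        ext x
        simp [Set.range_comp]
      rw [hWspan, Submodule.span_le]
      rintro _ ⟨i, rfl⟩
      show φ ((b i : V)) ∈ N
      exact Submodule.subset_span ⟨i, rfl⟩
    have hTN : W.map T ≤ N' := by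
      rintro _ ⟨x, hx, rfl⟩
      have hxN : φ x ∈ N := hWN hx
      show φ (T x) ∈ N
      have hX : φ (T x) = (X : F[X]) • φ x := (Module.AEval'.X_smul_of T x).symm
      rw [hN, Submodule.restrictScalars_mem] at hxN ⊢
      rw [hX]
      exact Submodule.smul_mem _ _ hxN
    have hN'top : N' = ⊤ := top_unique (hsplit ▸ sup_le hWN hTN)
    rw [eq_top_iff]
    intro y _
    have : φ.symm y ∈ N' := hN'top ▸ Submodule.mem_top
    simpa [hN', hN] using this
  -- the images under π generate the p-primary component
  set S : Finset M := Finset.image (fun i => π (g i)) Finset.univ with hS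
  have hSspan : Submodule.span F[X] (S : Set M)
      = ⨆ e : ℕ, Submodule.torsionBy F[X] M (p ^ e) := by
    have hcoe : (S : Set M) = π '' (Set.range g) := by
      rw [hS, Finset.coe_image, Finset.coe_univ, Set.image_univ, ← Set.range_comp]
      rfl
    rw [hcoe, ← Submodule.map_span, hspanTop, Submodule.map_top, hrange, hsup]
  have hcard : S.card ≤ m := le_trans Finset.card_image_le (by simp)
  have hk : S.card ∈ {k : ℕ | ∃ S : Finset (Module.AEval' T), S.card = k ∧
      Submodule.span F[X] (S : Set (Module.AEval' T)) =
        ⨆ e : ℕ, Submodule.torsionBy F[X] (Module.AEval' T) (p ^ e)} := ⟨S, rfl, hSspan⟩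
  have hle := Nat.sInf_le hk
  omega
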